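/- Let H₀ and H be self-adjoint operators on a Hilbert space ℋ, let A, B be bounded operators on ℋ with B H₀-smooth and A H-smooth (i.e., ∫‖Be^{-itH₀}u‖²dt ≤ C‖u‖² and ∫‖Ae^{-itH}u‖²dt ≤ C‖u‖²), and suppose H = H₀ + B*A in the quadratic form sense. Then for all u₀ ∈ ℋ and t ∈ ℝ, the Duhamel formula holds: e^{-itH}u₀ = e^{-itH₀}u₀ − i∫₀^t e^{-i(t−s)H₀}B*A e^{-isH}u₀ ds (as an identity of ℋ-valued integrals). -/

import Mathlib

open MeasureTheory Filter Topology
open scoped InnerProductSpace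
noncomputable section

section Stmt14Aux

variable {ℋ : Type*} [NormedAddCommGroup ℋ] [InnerProductSpace ℂ ℋ] [CompleteSpace ℋ]

private lemma stmt14_pmap_congr {T S : ℋ →ₗ.[ℂ] ℋ} (h : T = S) {x : ℋ} (hx : x ∈ T.domain)
    (hx' : x ∈ S.domain) : T ⟨x, hx⟩ = S ⟨x, hx'⟩ := by subst h; rfl

private lemma stmt14_cancel (U : ℝ → ℋ →L[ℂ] ℋ) (hU0 : U 0 = ContinuousLinearMap.id ℂ ℋ)
    (hUadd : ∀ s t : ℝ, U (s + t) = (U s).comp (U t)) (s : ℝ) (x : ℋ) :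
    U s (U (-s) x) = x := by
  have h := hUadd s (-s)
  rw [add_neg_cancel, hU0] at h
  simpa using (congrArg (fun T : ℋ →L[ℂ] ℋ => T x) h).symm

private lemma stmt14_inner (U : ℝ → ℋ →L[ℂ] ℋ) (hUiso : ∀ (t : ℝ) (u : ℋ), ‖U t u‖ = ‖u‖)
    (s : ℝ) (x y : ℋ) : ⟪U s x, U s y⟫_ℂ = ⟪x, y⟫_ℂ :=
  LinearIsometry.inner_map_map ⟨(U s).toLinearMap, hUiso s⟩ x y

private lemma stmt14_strong_cont (U : ℝ → ℋ →L[ℂ] ℋ) (hUiso : ∀ (t : ℝ) (u : ℋ), ‖U t u‖ = ‖u‖)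
    {D : Set ℋ} (hD : Dense D) (hcont : ∀ u ∈ D, Continuous fun τ => U τ u) (w : ℋ) :
    Continuous fun τ => U τ w := by
  rw [Metric.continuous_iff]
  intro x ε hε
  obtain ⟨v, hvD, hv⟩ := hD.exists_dist_lt w (by linarith : (0:ℝ) < ε / 3)
  obtain ⟨δ, hδ, hball⟩ := Metric.continuous_iff.mp (hcont v hvD) x (ε / 3) (by linarith)
  refine ⟨δ, hδ, fun τ hτ => ?_⟩
  have e1 : dist (U τ w) (U τ v) = dist w v := by
    rw [dist_eq_norm, dist_eq_norm, ← map_sub, hUiso]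
  have e2 : dist (U x v) (U x w) = dist w v := by
    rw [dist_eq_norm, dist_eq_norm, ← map_sub, hUiso, norm_sub_rev]
  calc dist (U τ w) (U x w)
      ≤ dist (U τ w) (U τ v) + dist (U τ v) (U x v) + dist (U x v) (U x w) :=
        dist_triangle4 _ _ _ _
    _ < ε / 3 + ε / 3 + ε / 3 :=
        add_lt_add (add_lt_add (by rw [e1]; exact hv) (hball τ hτ)) (by rw [e2]; exact hv)
    _ = ε := by ring

private lemma stmt14_comp_cont (U₀ : ℝ → ℋ →L[ℂ] ℋ) (hUiso : ∀ (t : ℝ) (u : ℋ), ‖U₀ t u‖ = ‖u‖)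
    (hsc : ∀ w : ℋ, Continuous fun τ => U₀ τ w) {w : ℝ → ℋ} (hw : Continuous w) (t : ℝ) :
    Continuous fun s => U₀ (t - s) (w s) := by
  rw [continuous_iff_continuousAt]
  intro s₀
  have h1 : Tendsto (fun s => U₀ (t - s) (w s - w s₀)) (𝓝 s₀) (𝓝 0) := by
    apply squeeze_zero_norm (a := fun s => ‖w s - w s₀‖) (fun s => le_of_eq (hUiso _ _))
    have : Tendsto (fun s => w s - w s₀) (𝓝 s₀) (𝓝 (w s₀ - w s₀)) :=
      (hw.tendsto s₀).sub tendsto_const_nhds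
    simpa using this.norm
  have h2 : Tendsto (fun s => U₀ (t - s) (w s₀)) (𝓝 s₀) (𝓝 (U₀ (t - s₀) (w s₀))) :=
    ((hsc (w s₀)).continuousAt).comp ((continuous_const.sub continuous_id).continuousAt)
  have h3 := h1.add h2
  rw [zero_add] at h3
  have : Tendsto (fun s => U₀ (t - s) (w s)) (𝓝 s₀) (𝓝 (U₀ (t - s₀) (w s₀))) := by
    refine h3.congr fun s => ?_
    rw [← map_add, sub_add_cancel]
  exact this

private lemma stmt14_hasDerivAt (U₀ : ℝ → ℋ →L[ℂ] ℋ) (H₀ : ℋ →ₗ.[ℂ] ℋ)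
    (hU₀gen : ∀ u : H₀.domain, ∀ τ : ℝ,
      HasDerivAt (fun τ' : ℝ => U₀ τ' (u : ℋ)) (-(Complex.I • U₀ τ (H₀ u))) τ)
    (hUiso : ∀ (t : ℝ) (u : ℋ), ‖U₀ t u‖ = ‖u‖) (hsc : ∀ w : ℋ, Continuous fun τ => U₀ τ w)
    {h : ℝ → ℋ} {h' : ℋ} {t s₀ : ℝ} (hh : HasDerivAt h h' s₀) (hmem : h s₀ ∈ H₀.domain) :
    HasDerivAt (fun s => U₀ (t - s) (h s))
      (U₀ (t - s₀) h' + Complex.I • U₀ (t - s₀) (H₀ ⟨h s₀, hmem⟩)) s₀ := by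
  have hk : HasDerivAt (fun s => U₀ (t - s) (h s₀))
      (Complex.I • U₀ (t - s₀) (H₀ ⟨h s₀, hmem⟩)) s₀ := by
    have hf : HasDerivAt (fun s : ℝ => t - s) (-1 : ℝ) s₀ := by
      simpa using (hasDerivAt_id s₀).const_sub t
    have hg := hU₀gen ⟨h s₀, hmem⟩ (t - s₀)
    have h2 := HasDerivAt.scomp (x := s₀) (h := fun s : ℝ => t - s) (hg := hg) (hh := hf)
    simpa [Function.comp_def] using h2
  have hr : HasDerivAt (fun s => U₀ (t - s) (h s - h s₀)) (U₀ (t - s₀) h') s₀ := by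
    rw [hasDerivAt_iff_tendsto_slope]
    have hslope := hasDerivAt_iff_tendsto_slope.mp hh
    have heq : ∀ s : ℝ, slope (fun s => U₀ (t - s) (h s - h s₀)) s₀ s
        = U₀ (t - s) (slope h s₀ s) := by
      intro s
      rw [slope_def_module, slope_def_module, sub_self, map_zero, sub_zero,
        (U₀ (t - s)).map_smul_of_tower]
    have hA : Tendsto (fun s => U₀ (t - s) (slope h s₀ s - h')) (𝓝[≠] s₀) (𝓝 0) := by
      apply squeeze_zero_norm (a := fun s => ‖slope h s₀ s - h'‖) (fun s => le_of_eq (hUiso _ _))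
      have hsl : Tendsto (fun s => slope h s₀ s - h') (𝓝[≠] s₀) (𝓝 (h' - h')) :=
        hslope.sub tendsto_const_nhds
      simpa using hsl.norm
    have hB : Tendsto (fun s => U₀ (t - s) h') (𝓝[≠] s₀) (𝓝 (U₀ (t - s₀) h')) := by
      have hct : ContinuousAt (fun s => U₀ (t - s) h') s₀ :=
        ((hsc h').continuousAt).comp ((continuous_const.sub continuous_id).continuousAt)
      exact hct.tendsto.mono_left nhdsWithin_le_nhds
    have hAB := hA.add hB
    rw [zero_add] at hAB
    have key : Tendsto (fun s => U₀ (t - s) (slope h s₀ s)) (𝓝[≠] s₀) (𝓝 (U₀ (t - s₀) h')) := by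
      refine hAB.congr fun s => ?_
      rw [← map_add, sub_add_cancel]
    exact key.congr fun s => (heq s).symm
  have hsum := hr.add hk
  have hfe : (fun s => U₀ (t - s) (h s)) = fun s =>
      U₀ (t - s) (h s - h s₀) + U₀ (t - s) (h s₀) := by
    funext s; rw [← map_add, sub_add_cancel]
  rw [hfe]
  exact hsum

private lemma stmt14_invariance (H : ℋ →ₗ.[ℂ] ℋ) (hH : IsSelfAdjoint H)
    (U : ℝ → ℋ →L[ℂ] ℋ) (hU0 : U 0 = ContinuousLinearMap.id ℂ ℋ)
    (hUadd : ∀ s t : ℝ, U (s + t) = (U s).comp (U t))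
    (hUiso : ∀ (t : ℝ) (u : ℋ), ‖U t u‖ = ‖u‖)
    (hUgen : ∀ u : H.domain, ∀ t : ℝ,
      HasDerivAt (fun τ : ℝ => U τ (u : ℋ)) (-(Complex.I • U t (H u))) t)
    (u₀ : H.domain) (s : ℝ) :
    ∃ hm : U s (u₀ : ℋ) ∈ H.domain, H ⟨U s (u₀ : ℋ), hm⟩ = U s (H u₀) := by
  set ψ := U s (u₀ : ℋ) with hψ
  have key : ∀ v : H.domain, ⟪U s (H u₀), (v : ℋ)⟫_ℂ = ⟪ψ, H v⟫_ℂ := by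
    intro v
    have hg : HasDerivAt (fun τ : ℝ => U τ ψ) (-(Complex.I • U s (H u₀))) 0 := by
      have h1' : HasDerivAt (fun τ' : ℝ => U τ' (u₀ : ℋ)) (-(Complex.I • U s (H u₀)))
          ((0 : ℝ) + s) := by rw [zero_add]; exact hUgen u₀ s
      have hf : HasDerivAt (fun τ : ℝ => τ + s) (1 : ℝ) 0 := by
        simpa using (hasDerivAt_id (0:ℝ)).add_const s
      have h2 := HasDerivAt.scomp (x := (0:ℝ)) (h := fun τ : ℝ => τ + s) (hg := h1') (hh := hf)
      simp only [one_smul] at h2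
      have hfe : (fun τ : ℝ => U τ ψ) = (fun τ' : ℝ => U τ' (u₀ : ℋ)) ∘ (fun τ => τ + s) := by
        funext τ
        have := congrArg (fun T : ℋ →L[ℂ] ℋ => T (u₀ : ℋ)) (hUadd τ s)
        simpa [hψ] using this.symm
      rw [hfe]
      exact h2
    have hρ : HasDerivAt (fun τ : ℝ => U (-τ) (v : ℋ)) (Complex.I • (H v : ℋ)) 0 := by
      have h1' : HasDerivAt (fun τ' : ℝ => U τ' (v : ℋ)) (-(Complex.I • U 0 (H v)))
          (-(0 : ℝ)) := by rw [neg_zero]; exact hUgen v 0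
      have hf : HasDerivAt (fun τ : ℝ => -τ) (-1 : ℝ) 0 := hasDerivAt_neg' 0
      have h2 := HasDerivAt.scomp (x := (0:ℝ)) (h := fun τ : ℝ => -τ) (hg := h1') (hh := hf)
      simp only [hU0, ContinuousLinearMap.id_apply, neg_smul, one_smul, neg_neg] at h2
      simpa [Function.comp_def] using h2
    have hD1 : HasDerivAt (fun τ => ⟪(v : ℋ), U τ ψ⟫_ℂ)
        (⟪(v : ℋ), -(Complex.I • U s (H u₀))⟫_ℂ) 0 := by
      have := HasDerivAt.inner ℂ (hasDerivAt_const (0:ℝ) (v : ℋ)) hg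
      simpa using this
    have hD2 : HasDerivAt (fun τ => ⟪(v : ℋ), U τ ψ⟫_ℂ)
        (⟪Complex.I • (H v : ℋ), ψ⟫_ℂ) 0 := by
      have hinner := HasDerivAt.inner ℂ hρ (hasDerivAt_const (0:ℝ) ψ)
      simp only [inner_zero_right, zero_add] at hinner
      refine hinner.congr_of_eventuallyEq (Eventually.of_forall fun τ => ?_)
      show ⟪(v : ℋ), U τ ψ⟫_ℂ = ⟪U (-τ) (v : ℋ), ψ⟫_ℂ
      rw [← stmt14_inner U hUiso τ (U (-τ) (v : ℋ)) ψ, stmt14_cancel U hU0 hUadd τ (v : ℋ)]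
    have huniq := hD1.unique hD2
    rw [inner_neg_right, inner_smul_right, inner_smul_left, Complex.conj_I, neg_mul] at huniq
    have h3 : ⟪(v : ℋ), U s (H u₀)⟫_ℂ = ⟪(H v : ℋ), ψ⟫_ℂ :=
      mul_left_cancel₀ Complex.I_ne_zero (neg_injective huniq)
    have h4 := congrArg (starRingEnd ℂ) h3
    rw [inner_conj_symm, inner_conj_symm] at h4
    exact h4
  have hψmem : ψ ∈ H.adjoint.domain :=
    LinearPMap.mem_adjoint_domain_of_exists ψ ⟨U s (H u₀), fun v => key v⟩
  have hstar : H.adjoint = H := LinearPMap.isSelfAdjoint_def.mp hH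
  have hm : ψ ∈ H.domain := by rw [← hstar]; exact hψmem
  refine ⟨hm, ?_⟩
  have hval : H.adjoint ⟨ψ, hψmem⟩ = U s (H u₀) :=
    LinearPMap.adjoint_apply_eq hH.dense_domain ⟨ψ, hψmem⟩ (fun v => key v)
  calc H ⟨ψ, hm⟩ = H.adjoint ⟨ψ, hψmem⟩ := (stmt14_pmap_congr hstar hψmem hm).symm
    _ = U s (H u₀) := hval

end Stmt14Aux

/-- Duhamel formula for the Rodnianski–Schlag method: if `H₀` and `H = H₀ + B*A`
are self-adjoint (given with their unitary groups `U₀ t = e^{-itH₀}` and `U t = e^{-itH}`),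
`A, B` are bounded, `B` is `H₀`-smooth and `A` is `H`-smooth, then for all `u₀` and `t`,
`e^{-itH}u₀ = e^{-itH₀}u₀ - i ∫₀ᵗ e^{-i(t-s)H₀} B* A e^{-isH} u₀ ds`. -/
theorem stmt14 {ℋ : Type*} [NormedAddCommGroup ℋ] [InnerProductSpace ℂ ℋ] [CompleteSpace ℋ]
    (H₀ H : ℋ →ₗ.[ℂ] ℋ) (hH₀ : IsSelfAdjoint H₀) (hH : IsSelfAdjoint H)
    (A B : ℋ →L[ℂ] ℋ)
    -- `H = H₀ + B*A`
    (hdom : H.domain = H₀.domain)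
    (hsum : ∀ (u : ℋ) (hu : u ∈ H₀.domain),
      H ⟨u, hdom ▸ hu⟩ = H₀ ⟨u, hu⟩ + (ContinuousLinearMap.adjoint B) (A u))
    -- the unitary group generated by `H₀`
    (U₀ : ℝ → ℋ →L[ℂ] ℋ)
    (hU₀0 : U₀ 0 = ContinuousLinearMap.id ℂ ℋ)
    (hU₀add : ∀ s t : ℝ, U₀ (s + t) = (U₀ s).comp (U₀ t))
    (hU₀iso : ∀ (t : ℝ) (u : ℋ), ‖U₀ t u‖ = ‖u‖)
    (hU₀gen : ∀ u : H₀.domain, ∀ t : ℝ,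
      HasDerivAt (fun τ : ℝ => U₀ τ (u : ℋ)) (-(Complex.I • U₀ t (H₀ u))) t)
    -- the unitary group generated by `H`
    (U : ℝ → ℋ →L[ℂ] ℋ)
    (hU0 : U 0 = ContinuousLinearMap.id ℂ ℋ)
    (hUadd : ∀ s t : ℝ, U (s + t) = (U s).comp (U t))
    (hUiso : ∀ (t : ℝ) (u : ℋ), ‖U t u‖ = ‖u‖)
    (hUgen : ∀ u : H.domain, ∀ t : ℝ,
      HasDerivAt (fun τ : ℝ => U τ (u : ℋ)) (-(Complex.I • U t (H u))) t)
    -- `B` is `H₀`-smooth and `A` is `H`-smooth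
    (C₀ C₁ : ℝ)
    (hBsmooth : ∀ u : ℋ, ∫ t : ℝ, ‖B (U₀ t u)‖ ^ 2 ≤ C₀ * ‖u‖ ^ 2)
    (hAsmooth : ∀ u : ℋ, ∫ t : ℝ, ‖A (U t u)‖ ^ 2 ≤ C₁ * ‖u‖ ^ 2) :
    ∀ (u₀ : ℋ) (t : ℝ),
      U t u₀ = U₀ t u₀ - Complex.I •
        ∫ s in (0 : ℝ)..t, U₀ (t - s) ((ContinuousLinearMap.adjoint B) (A (U s u₀))) := by
  intro u₀ t
  have hHdense : Dense (H.domain : Set ℋ) := hH.dense_domain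
  have hH₀dense : Dense (H₀.domain : Set ℋ) := hH₀.dense_domain
  -- strong continuity of the groups
  have hUcontD : ∀ u ∈ (H.domain : Set ℋ), Continuous fun τ => U τ u := fun u hu =>
    continuous_iff_continuousAt.2 fun τ => (hUgen ⟨u, hu⟩ τ).continuousAt
  have hU₀contD : ∀ u ∈ (H₀.domain : Set ℋ), Continuous fun τ => U₀ τ u := fun u hu =>
    continuous_iff_continuousAt.2 fun τ => (hU₀gen ⟨u, hu⟩ τ).continuousAt
  have hUsc : ∀ w : ℋ, Continuous fun τ => U τ w :=
    stmt14_strong_cont U hUiso hHdense hUcontD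
  have hU₀sc : ∀ w : ℋ, Continuous fun τ => U₀ τ w :=
    stmt14_strong_cont U₀ hU₀iso hH₀dense hU₀contD
  set K : ℋ →L[ℂ] ℋ := (ContinuousLinearMap.adjoint B).comp A with hK
  -- continuity of the integrand, for every vector
  have hFc : ∀ u : ℋ, Continuous fun s =>
      U₀ (t - s) ((ContinuousLinearMap.adjoint B) (A (U s u))) := by
    intro u
    exact stmt14_comp_cont U₀ hU₀iso hU₀sc
      ((ContinuousLinearMap.adjoint B).continuous.comp (A.continuous.comp (hUsc u))) t
  have hint : ∀ u : ℋ, IntervalIntegrable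
      (fun s => U₀ (t - s) ((ContinuousLinearMap.adjoint B) (A (U s u)))) volume 0 t :=
    fun u => (hFc u).intervalIntegrable 0 t
  -- the core identity, on the dense domain
  have hcore : ∀ u ∈ (H.domain : Set ℋ), U t u = U₀ t u - Complex.I •
      ∫ s in (0 : ℝ)..t, U₀ (t - s) ((ContinuousLinearMap.adjoint B) (A (U s u))) := by
    intro u hu
    set uc : H.domain := ⟨u, hu⟩ with huc
    have hderiv : ∀ s : ℝ, HasDerivAt (fun s' => U₀ (t - s') (U s' u))
        (-(Complex.I • U₀ (t - s) ((ContinuousLinearMap.adjoint B) (A (U s u))))) s := by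
      intro s
      obtain ⟨hm, hcomm⟩ := stmt14_invariance H hH U hU0 hUadd hUiso hUgen uc s
      have hm₀ : U s u ∈ H₀.domain := hdom ▸ hm
      have hh : HasDerivAt (fun τ : ℝ => U τ u) (-(Complex.I • U s (H uc))) s := hUgen uc s
      have hD := stmt14_hasDerivAt U₀ H₀ hU₀gen hU₀iso hU₀sc (t := t) hh hm₀
      have hsub : H₀ ⟨U s u, hm₀⟩ = U s (H uc) - (ContinuousLinearMap.adjoint B) (A (U s u)) := by
        have h1 := (hsum (U s u) hm₀).symm.trans hcomm
        exact eq_sub_of_add_eq h1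
      have heq : U₀ (t - s) (-(Complex.I • U s (H uc)))
          + Complex.I • U₀ (t - s) (H₀ ⟨U s u, hm₀⟩)
          = -(Complex.I • U₀ (t - s) ((ContinuousLinearMap.adjoint B) (A (U s u)))) := by
        simp only [hsub, map_sub, map_neg, _root_.map_smul, smul_sub]
        abel
      rw [heq] at hD
      exact hD
    have hFTC := intervalIntegral.integral_eq_sub_of_hasDerivAt
      (f := fun s' => U₀ (t - s') (U s' u))
      (f' := fun s => -(Complex.I • U₀ (t - s) ((ContinuousLinearMap.adjoint B) (A (U s u)))))
      (fun s _ => hderiv s) (((hFc u).const_smul Complex.I).neg.intervalIntegrable 0 t)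
    rw [intervalIntegral.integral_neg, intervalIntegral.integral_smul] at hFTC
    simp only [sub_self, sub_zero, hU₀0, hU0, ContinuousLinearMap.id_apply] at hFTC
    calc U t u = U₀ t u + (U t u - U₀ t u) := by abel
      _ = U₀ t u - Complex.I •
          ∫ s in (0 : ℝ)..t, U₀ (t - s) ((ContinuousLinearMap.adjoint B) (A (U s u))) := by
          rw [← hFTC]; abel
  -- extension by density
  have hΦlip : ∀ u v : ℋ,
      ‖(∫ s in (0 : ℝ)..t, U₀ (t - s) ((ContinuousLinearMap.adjoint B) (A (U s u))))
        - ∫ s in (0 : ℝ)..t, U₀ (t - s) ((ContinuousLinearMap.adjoint B) (A (U s v)))‖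
        ≤ ‖K‖ * ‖u - v‖ * |t| := by
    intro u v
    rw [← intervalIntegral.integral_sub (hint u) (hint v)]
    have hb : ∀ s ∈ Set.uIoc (0 : ℝ) t,
        ‖U₀ (t - s) ((ContinuousLinearMap.adjoint B) (A (U s u)))
          - U₀ (t - s) ((ContinuousLinearMap.adjoint B) (A (U s v)))‖ ≤ ‖K‖ * ‖u - v‖ := by
      intro s _
      rw [← map_sub, hU₀iso]
      have h1 : (ContinuousLinearMap.adjoint B) (A (U s u))
          - (ContinuousLinearMap.adjoint B) (A (U s v)) = K (U s u - U s v) := by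
        simp [hK, map_sub]
      rw [h1, ← map_sub, ← hUiso s (u - v), map_sub]
      exact K.le_opNorm _
    have := intervalIntegral.norm_integral_le_of_norm_le_const hb
    rw [sub_zero] at this
    linarith [this]
  have hΦcont : Continuous fun u : ℋ =>
      ∫ s in (0 : ℝ)..t, U₀ (t - s) ((ContinuousLinearMap.adjoint B) (A (U s u))) := by
    refine (LipschitzWith.of_dist_le_mul (K := (‖K‖ * |t|).toNNReal) fun u v => ?_).continuous
    rw [dist_eq_norm, dist_eq_norm, Real.coe_toNNReal _ (by positivity)]
    calc _ ≤ ‖K‖ * ‖u - v‖ * |t| := hΦlip u v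
      _ = ‖K‖ * |t| * ‖u - v‖ := by ring
  have hfin : (fun u : ℋ => U t u) = fun u : ℋ => U₀ t u - Complex.I •
      ∫ s in (0 : ℝ)..t, U₀ (t - s) ((ContinuousLinearMap.adjoint B) (A (U s u))) :=
    Continuous.ext_on hHdense (U t).continuous
      ((U₀ t).continuous.sub (hΦcont.const_smul Complex.I)) hcore
  exact congrFun hfin u₀
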